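/- Let G be a group and let θ₁, θ₂ be automorphisms of G that each induce the identity map on G/G''. Then θ₁ and θ₂ agree with the identity on G'' — that is, θ₁(u) = u for all u ∈ G''. -/

import Mathlib

open scoped commutatorElement

private lemma left_absorb' {G : Type*} [Group G] (c a X : G)
    (h : Commute c (a * X * a⁻¹)) : ⁅c * a, X⁆ = ⁅a, X⁆ := by
  rw [commutatorElement_def, commutatorElement_def, mul_inv_rev]
  calc c * a * X * (a⁻¹ * c⁻¹) * X⁻¹ = c * (a * X * a⁻¹) * c⁻¹ * X⁻¹ := by group
    _ = a * X * a⁻¹ * X⁻¹ := by rw [h.eq]; group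

private lemma fix_aux {G : Type*} [Group G]
    (comm : ∀ x ∈ derivedSeries G 1, ∀ y ∈ derivedSeries G 2, Commute x y)
    (θ : G ≃* G) (hθ : ∀ g : G, θ g * g⁻¹ ∈ derivedSeries G 2) :
    ∀ u ∈ derivedSeries G 2, θ u = u := by
  haveI : (derivedSeries G 1).Normal := derivedSeries_normal G 1
  have le21 : derivedSeries G 2 ≤ derivedSeries G 1 := by
    rw [derivedSeries_succ]
    exact Subgroup.commutator_le_left _ _
  intro u hu
  have hu' : u ∈ Subgroup.closure
      {g | ∃ g₁ ∈ derivedSeries G 1, ∃ g₂ ∈ derivedSeries G 1, ⁅g₁, g₂⁆ = g} := by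
    rw [derivedSeries_succ, Subgroup.commutator_def] at hu
    exact hu
  clear hu
  induction hu' using Subgroup.closure_induction with
  | mem x hx =>
    obtain ⟨a, ha, b, hb, rfl⟩ := hx
    set c : G := θ a * a⁻¹ with hc
    set d : G := θ b * b⁻¹ with hd
    have hcm : c ∈ derivedSeries G 2 := hθ a
    have hdm : d ∈ derivedSeries G 2 := hθ b
    have hca : Commute c a := (comm a ha c hcm).symm
    have hcb : Commute c b := (comm b hb c hcm).symm
    have hcd : Commute c d := (comm c (le21 hcm) d hdm)
    have hda : Commute d a := (comm a ha d hdm).symm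
    have hdb : Commute d b := (comm b hb d hdm).symm
    have hθa : θ a = c * a := by rw [hc]; group
    have hθb : θ b = d * b := by rw [hd]; group
    have k1 : ⁅c * a, d * b⁆ = ⁅a, d * b⁆ :=
      left_absorb' c a (d * b)
        ((hca.mul_right (hcd.mul_right hcb)).mul_right hca.inv_right)
    have k2 : ⁅d * b, a⁆ = ⁅b, a⁆ :=
      left_absorb' d b a ((hdb.mul_right hda).mul_right hdb.inv_right)
    calc θ ⁅a, b⁆ = ⁅θ a, θ b⁆ := map_commutatorElement θ a b
      _ = ⁅c * a, d * b⁆ := by rw [hθa, hθb]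
      _ = ⁅a, d * b⁆ := k1
      _ = ⁅d * b, a⁆⁻¹ := (commutatorElement_inv (d * b) a).symm
      _ = ⁅b, a⁆⁻¹ := by rw [k2]
      _ = ⁅a, b⁆ := commutatorElement_inv b a
  | one => exact map_one θ
  | mul x y hx hy ihx ihy => rw [map_mul, ihx, ihy]
  | inv x hx ihx => rw [map_inv, ihx]

theorem stmt16 {G : Type*} [Group G]
    (h : ⁅⁅derivedSeries G 2, (⊤ : Subgroup G)⁆, (⊤ : Subgroup G)⁆ = (⊥ : Subgroup G))
    (θ₁ θ₂ : G ≃* G)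
    (h₁ : ∀ g : G, θ₁ g * g⁻¹ ∈ derivedSeries G 2)
    (h₂ : ∀ g : G, θ₂ g * g⁻¹ ∈ derivedSeries G 2) :
    ∀ u ∈ derivedSeries G 2, θ₁ u = u ∧ θ₂ u = u := by
  -- three subgroups lemma gives ⁅G', G''⁆ = ⊥
  have key : ⁅⁅(⊤ : Subgroup G), (⊤ : Subgroup G)⁆, derivedSeries G 2⁆ = ⊥ := by
    apply Subgroup.commutator_commutator_eq_bot_of_rotate
    · rw [Subgroup.commutator_comm (⊤ : Subgroup G) (derivedSeries G 2)]; exact h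
    · exact h
  have key' : ⁅derivedSeries G 1, derivedSeries G 2⁆ = ⊥ := by
    rw [show derivedSeries G 1 = ⁅(⊤ : Subgroup G), (⊤ : Subgroup G)⁆ by
      rw [derivedSeries_succ, derivedSeries_zero]]
    exact key
  have comm : ∀ x ∈ derivedSeries G 1, ∀ y ∈ derivedSeries G 2, Commute x y := by
    intro x hx y hy
    have : ⁅x, y⁆ ∈ (⊥ : Subgroup G) := by
      rw [← key']; exact Subgroup.commutator_mem_commutator hx hy
    rw [Subgroup.mem_bot] at this
    exact commutatorElement_eq_one_iff_commute.mp this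
  intro u hu
  exact ⟨fix_aux comm θ₁ h₁ u hu, fix_aux comm θ₂ h₂ u hu⟩
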